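/- The Laplace-noised threshold test on a 1-sensitive statistic is ε-differentially private: let ε > 0, let f map finite multisets of records to ℝ with the property that |f(D + {x}) − f(D)| ≤ 1 for every multiset D and record x, and let L be a random variable with the Laplace distribution of scale 1/ε, i.e., with density (ε/2)·exp(−ε|t|) with respect to Lebesgue measure on ℝ. For a fixed threshold τ ∈ ℝ and multiset D, let P(D) = Pr[f(D) + L ≥ τ]. Then for every multiset D and record x, letting D' = D + {x}, both P(D) ≤ e^ε · P(D') and 1 − P(D) ≤ e^ε · (1 − P(D')), and symmetrically with D and D' exchanged. -/

import Mathlib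

open MeasureTheory
open scoped ENNReal

/-- The Laplace distribution with scale `1/ε`: the measure on `ℝ` with density
`t ↦ (ε/2)·exp(−ε·|t|)` with respect to Lebesgue measure. -/
noncomputable def laplaceMeasure (ε : ℝ) : Measure ℝ :=
  volume.withDensity fun t => ENNReal.ofReal (ε / 2 * Real.exp (-ε * |t|))

/-- `Pr[f(D) + L ≥ τ]` where `L` is Laplace noise of scale `1/ε`. -/
noncomputable def noisyThresholdProb {X : Type*} (ε : ℝ) (f : Multiset X → ℝ) (τ : ℝ)
    (D : Multiset X) : ℝ≥0∞ :=
  laplaceMeasure ε {t : ℝ | τ ≤ f D + t}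

open Set Real in
lemma laplace_integrable {ε : ℝ} (hε : 0 < ε) :
    Integrable (fun t : ℝ => Real.exp (-ε * |t|)) := by
  have hIoi : IntegrableOn (fun t : ℝ => Real.exp (-ε * |t|)) (Ioi 0) := by
    refine (exp_neg_integrableOn_Ioi 0 hε).congr_fun (fun t ht => ?_) measurableSet_Ioi
    rw [abs_of_pos ht]
  have hIic : IntegrableOn (fun t : ℝ => Real.exp (-ε * |t|)) (Iic 0) := by
    rw [← Measure.map_neg_eq_self (volume : Measure ℝ)]
    have m : MeasurableEmbedding fun x : ℝ => -x :=
      (Homeomorph.neg ℝ).measurableEmbedding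
    rw [m.integrableOn_map_iff]
    simp_rw [Function.comp_def, abs_neg, neg_preimage, neg_Iic, neg_zero]
    exact Iff.mpr integrableOn_Ici_iff_integrableOn_Ioi hIoi
  have := hIic.union hIoi
  rwa [Iic_union_Ioi, integrableOn_univ] at this

open Set Real in
lemma laplace_integral {ε : ℝ} (hε : 0 < ε) :
    ∫ t : ℝ, ε / 2 * Real.exp (-ε * |t|) = 1 := by
  have h1 : ∫ x in Ioi (0 : ℝ), Real.exp (-ε * x) = ε⁻¹ := by
    have := integral_exp_neg_mul_rpow (p := 1) one_pos hε
    simpa [Real.rpow_natCast, one_add_one_eq_two, Real.Gamma_two, Real.rpow_neg_one] using this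
  have h2 : ∫ t : ℝ, Real.exp (-ε * |t|) = 2 * ε⁻¹ := by
    rw [integral_comp_abs (f := fun x => Real.exp (-ε * x)), h1]
  rw [MeasureTheory.integral_const_mul, h2]
  field_simp

lemma laplace_univ {ε : ℝ} (hε : 0 < ε) : laplaceMeasure ε Set.univ = 1 := by
  rw [laplaceMeasure, withDensity_apply _ MeasurableSet.univ, Measure.restrict_univ]
  have hi : Integrable (fun t : ℝ => ε / 2 * Real.exp (-ε * |t|)) :=
    (laplace_integrable hε).const_mul (ε / 2)
  have hnn : 0 ≤ᵐ[(volume : Measure ℝ)] fun t : ℝ => ε / 2 * Real.exp (-ε * |t|) :=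
    Filter.Eventually.of_forall fun t => by positivity
  rw [← ofReal_integral_eq_lintegral_ofReal hi hnn, laplace_integral hε, ENNReal.ofReal_one]

lemma laplace_shift {ε : ℝ} (hε : 0 < ε) {d : ℝ} (hd : |d| ≤ 1) {A : Set ℝ}
    (hA : MeasurableSet A) :
    laplaceMeasure ε A
      ≤ ENNReal.ofReal (Real.exp ε) * laplaceMeasure ε ((fun t => t + d) ⁻¹' A) := by
  have hmeas : Measurable fun t : ℝ => t + d := measurable_add_const d
  have hA' : MeasurableSet ((fun t : ℝ => t + d) ⁻¹' A) := hA.preimage hmeas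
  set G : ℝ → ℝ≥0∞ := fun t => ENNReal.ofReal (ε / 2 * Real.exp (-ε * |t|)) with hG
  have key : ∀ t : ℝ, G (t + d) ≤ ENNReal.ofReal (Real.exp ε) * G t := by
    intro t
    rw [hG, ← ENNReal.ofReal_mul (Real.exp_pos ε).le]
    apply ENNReal.ofReal_le_ofReal
    have habs : |t| - |t + d| ≤ 1 := by
      have := abs_sub_abs_le_abs_sub t (t + d)
      simp only [sub_add_cancel_left, abs_neg] at this
      linarith
    have hexp : Real.exp (-ε * |t + d|) ≤ Real.exp ε * Real.exp (-ε * |t|) := by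
      rw [← Real.exp_add]
      apply Real.exp_le_exp.mpr
      nlinarith
    nlinarith [Real.exp_pos (-ε * |t + d|)]
  calc laplaceMeasure ε A = ∫⁻ t, A.indicator G t := by
        rw [laplaceMeasure, withDensity_apply _ hA, lintegral_indicator hA]
    _ = ∫⁻ t, A.indicator G (t + d) := (lintegral_add_right_eq_self _ d).symm
    _ = ∫⁻ t, ((fun t : ℝ => t + d) ⁻¹' A).indicator (fun t => G (t + d)) t := by
        apply lintegral_congr
        intro t
        by_cases h : t + d ∈ A <;>
          simp [Set.indicator_apply, Set.mem_preimage, h]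
    _ ≤ ∫⁻ t, ((fun t : ℝ => t + d) ⁻¹' A).indicator
          (fun t => ENNReal.ofReal (Real.exp ε) * G t) t := by
        apply lintegral_mono
        intro t
        by_cases h : t ∈ (fun t : ℝ => t + d) ⁻¹' A <;>
          simp [Set.indicator_apply, h, key t]
    _ = ENNReal.ofReal (Real.exp ε) * laplaceMeasure ε ((fun t : ℝ => t + d) ⁻¹' A) := by
        rw [lintegral_indicator hA', lintegral_const_mul _ _, laplaceMeasure,
          withDensity_apply _ hA']
        exact ENNReal.measurable_ofReal.comp
          ((measurable_const.mul (Real.measurable_exp.comp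
            ((measurable_const.mul measurable_abs)))))

lemma threshold_set_eq {X : Type*} (f : Multiset X → ℝ) (τ : ℝ) (D : Multiset X) :
    {t : ℝ | τ ≤ f D + t} = Set.Ici (τ - f D) := by
  ext t
  simp only [Set.mem_setOf_eq, Set.mem_Ici]
  constructor <;> intro h <;> linarith

lemma preimage_Ici (a d : ℝ) : (fun t : ℝ => t + d) ⁻¹' Set.Ici a = Set.Ici (a - d) := by
  ext t
  simp only [Set.mem_preimage, Set.mem_Ici]
  constructor <;> intro h <;> linarith

/-- The Laplace-noised threshold test on a 1-sensitive statistic is `ε`-differentially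
private (add-remove model): both the pass probability and the fail probability change by
at most a factor `e^ε` between neighboring databases, in both directions. -/
theorem noisyThreshold_dp {X : Type*} (ε : ℝ) (hε : 0 < ε) (f : Multiset X → ℝ)
    (hf : ∀ (D : Multiset X) (x : X), |f (x ::ₘ D) - f D| ≤ 1) (τ : ℝ)
    (D : Multiset X) (x : X) :
    noisyThresholdProb ε f τ D
        ≤ ENNReal.ofReal (Real.exp ε) * noisyThresholdProb ε f τ (x ::ₘ D) ∧
    1 - noisyThresholdProb ε f τ D
        ≤ ENNReal.ofReal (Real.exp ε) * (1 - noisyThresholdProb ε f τ (x ::ₘ D)) ∧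
    noisyThresholdProb ε f τ (x ::ₘ D)
        ≤ ENNReal.ofReal (Real.exp ε) * noisyThresholdProb ε f τ D ∧
    1 - noisyThresholdProb ε f τ (x ::ₘ D)
        ≤ ENNReal.ofReal (Real.exp ε) * (1 - noisyThresholdProb ε f τ D) := by
  haveI : IsProbabilityMeasure (laplaceMeasure ε) := ⟨laplace_univ hε⟩
  set D' := x ::ₘ D with hD'
  have hP : ∀ E : Multiset X, noisyThresholdProb ε f τ E = laplaceMeasure ε (Set.Ici (τ - f E)) :=
    fun E => by rw [noisyThresholdProb, threshold_set_eq]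
  have hd1 : |f D' - f D| ≤ 1 := hf D x
  have hd2 : |f D - f D'| ≤ 1 := by rw [abs_sub_comm]; exact hd1
  -- generic one-sided statement for `Ici` sets
  have main : ∀ a b : ℝ, |a - b| ≤ 1 →
      laplaceMeasure ε (Set.Ici a) ≤ ENNReal.ofReal (Real.exp ε) * laplaceMeasure ε (Set.Ici b) := by
    intro a b hab
    have := laplace_shift hε (d := a - b) hab (A := Set.Ici a) measurableSet_Ici
    rwa [preimage_Ici, show a - (a - b) = b by ring] at this
  have mainC : ∀ a b : ℝ, |a - b| ≤ 1 →
      laplaceMeasure ε (Set.Ici a)ᶜ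
        ≤ ENNReal.ofReal (Real.exp ε) * laplaceMeasure ε (Set.Ici b)ᶜ := by
    intro a b hab
    have := laplace_shift hε (d := a - b) hab (A := (Set.Ici a)ᶜ) measurableSet_Ici.compl
    rwa [Set.preimage_compl, preimage_Ici, show a - (a - b) = b by ring] at this
  have hcompl : ∀ E : Multiset X,
      1 - noisyThresholdProb ε f τ E = laplaceMeasure ε (Set.Ici (τ - f E))ᶜ := by
    intro E
    rw [hP, prob_compl_eq_one_sub measurableSet_Ici]
  refine ⟨?_, ?_, ?_, ?_⟩
  · rw [hP, hP]
    exact main _ _ (by rw [show τ - f D - (τ - f D') = f D' - f D by ring] at *; simpa using hd1)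
  · rw [hcompl, hcompl]
    exact mainC _ _ (by simpa using (by rw [show τ - f D - (τ - f D') = f D' - f D by ring]; exact hd1 : |τ - f D - (τ - f D')| ≤ 1))
  · rw [hP, hP]
    refine main _ _ ?_
    rw [show τ - f D' - (τ - f D) = f D - f D' by ring]; exact hd2
  · rw [hcompl, hcompl]
    refine mainC _ _ ?_
    rw [show τ - f D' - (τ - f D) = f D - f D' by ring]; exact hd2
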